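/- (Decomposition, Proposition 2.1.) Let α ∈ (-1,1), β⁻, β⁺ > 0, f : ℝ → ℝ, and ξ, η ∈ ℝ. Suppose: (a) u is twice differentiable on (-1,α) and (α,1) with β⁻·u'' = −f on (-1,α) and β⁺·u'' = −f on (α,1), continuous on [-1,α) and (α,1] with u(-1) = ξ, u(1) = η, has one-sided limits of u and u' at α, and satisfies flux continuity lim_{x→α⁻} β⁻·u'(x) = lim_{x→α⁺} β⁺·u'(x); (b) u₀ satisfies the same differential equation, boundary values, existence of one-sided limits and flux continuity, and additionally has zero jump: u₀⁺(α) − u₀⁻(α) = 0; (c) u₁ is twice differentiable with u₁'' = 0 on (-1,α) and (α,1), continuous on [-1,α) and (α,1] with u₁(-1) = 0 and u₁(1) = 0, has one-sided limits of u₁ and u₁' at α, satisfies flux continuity, and has unit jump u₁⁺(α) − u₁⁻(α) = 1. Then, with s = u⁺(α) − u⁻(α), one has u(x) = u₀(x) + s·u₁(x) for all x ∈ [-1,α) ∪ (α,1]. -/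

import Mathlib

open Set Filter

lemma const_on_of_deriv_zero {s : Set ℝ} (hs : IsOpen s) (hc : Convex ℝ s) {g : ℝ → ℝ}
    (hdiff : ∀ x ∈ s, DifferentiableAt ℝ g x) (hder : ∀ x ∈ s, deriv g x = 0)
    {x y : ℝ} (hx : x ∈ s) (hy : y ∈ s) : g x = g y := by
  refine hc.is_const_of_fderivWithin_eq_zero
    (fun z hz => (hdiff z hz).differentiableWithinAt) (fun z hz => ?_) hx hy
  rw [fderivWithin_of_isOpen hs hz, ← toSpanSingleton_deriv, hder z hz]
  ext t
  simp

lemma affine_on_Ioo {a b : ℝ} (hab : a < b) {w : ℝ → ℝ}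
    (hd : ∀ x ∈ Ioo a b, DifferentiableAt ℝ w x ∧ DifferentiableAt ℝ (deriv w) x ∧
      deriv (deriv w) x = 0) :
    ∃ k c, (∀ x ∈ Ioo a b, deriv w x = k) ∧ (∀ x ∈ Ioo a b, w x = k * x + c) := by
  have hx₀ : (a + b) / 2 ∈ Ioo a b := ⟨by linarith, by linarith⟩
  set x₀ := (a + b) / 2
  refine ⟨deriv w x₀, w x₀ - deriv w x₀ * x₀, ?_, ?_⟩
  · intro x hx
    exact const_on_of_deriv_zero isOpen_Ioo (convex_Ioo a b)
      (fun z hz => (hd z hz).2.1) (fun z hz => (hd z hz).2.2) hx hx₀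
  · intro x hx
    have key : ∀ z ∈ Ioo a b, deriv (fun t => w t - deriv w x₀ * t) z = 0 := by
      intro z hz
      have h1 : DifferentiableAt ℝ (fun t : ℝ => deriv w x₀ * t) z :=
        (differentiableAt_id.const_mul _)
      rw [deriv_fun_sub (hd z hz).1 h1]
      have : deriv (fun t : ℝ => deriv w x₀ * t) z = deriv w x₀ := by
        simpa using ((hasDerivAt_id z).const_mul (deriv w x₀)).deriv
      rw [this]
      have : deriv w z = deriv w x₀ :=
        const_on_of_deriv_zero isOpen_Ioo (convex_Ioo a b)
          (fun t ht => (hd t ht).2.1) (fun t ht => (hd t ht).2.2) hz hx₀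
      linarith
    have := const_on_of_deriv_zero isOpen_Ioo (convex_Ioo a b)
      (fun z hz => ((hd z hz).1.sub (differentiableAt_id.const_mul _))) key hx hx₀
    simp only [Pi.sub_apply] at this
    linarith

/-- On an open interval where `u, u₀, u₁` all satisfy the second-order hypotheses with
matching right-hand sides, the combination `w = u - u₀ - s·u₁` is affine, and we also record
the formula for `deriv w` on the interval. -/
lemma combo_affine {a b β : ℝ} (hab : a < b) (hβ : 0 < β) {f u u₀ u₁ : ℝ → ℝ} (s : ℝ)
    (hu : ∀ x ∈ Ioo a b, DifferentiableAt ℝ u x ∧ DifferentiableAt ℝ (deriv u) x ∧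
        β * deriv (deriv u) x = -f x)
    (h0 : ∀ x ∈ Ioo a b, DifferentiableAt ℝ u₀ x ∧ DifferentiableAt ℝ (deriv u₀) x ∧
        β * deriv (deriv u₀) x = -f x)
    (h1 : ∀ x ∈ Ioo a b, DifferentiableAt ℝ u₁ x ∧ DifferentiableAt ℝ (deriv u₁) x ∧
        deriv (deriv u₁) x = 0) :
    ∃ k c, (∀ x ∈ Ioo a b,
        deriv u x - deriv u₀ x - s * deriv u₁ x = k) ∧
      (∀ x ∈ Ioo a b, u x - u₀ x - s * u₁ x = k * x + c) := by
  set w : ℝ → ℝ := fun x => u x - u₀ x - s * u₁ x with hw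
  -- formula for deriv w on the open interval
  have hdw : ∀ x ∈ Ioo a b, deriv w x = deriv u x - deriv u₀ x - s * deriv u₁ x := by
    intro x hx
    have h1' : DifferentiableAt ℝ (fun t => s * u₁ t) x := (h1 x hx).1.const_mul s
    rw [hw]
    rw [deriv_fun_sub (f := fun y => u y - u₀ y) ((hu x hx).1.sub (h0 x hx).1) h1', deriv_fun_sub (hu x hx).1 (h0 x hx).1,
      deriv_const_mul s (h1 x hx).1]
  have hdweq : ∀ x ∈ Ioo a b, deriv w =ᶠ[nhds x]
      fun t => deriv u t - deriv u₀ t - s * deriv u₁ t := by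
    intro x hx
    filter_upwards [isOpen_Ioo.mem_nhds hx] with t ht using hdw t ht
  have hd : ∀ x ∈ Ioo a b, DifferentiableAt ℝ w x ∧ DifferentiableAt ℝ (deriv w) x ∧
      deriv (deriv w) x = 0 := by
    intro x hx
    have hg : DifferentiableAt ℝ
        (fun t => deriv u t - deriv u₀ t - s * deriv u₁ t) x :=
      ((hu x hx).2.1.sub (h0 x hx).2.1).sub ((h1 x hx).2.1.const_mul s)
    refine ⟨((hu x hx).1.sub (h0 x hx).1).sub ((h1 x hx).1.const_mul s), ?_, ?_⟩
    · exact hg.congr_of_eventuallyEq (hdweq x hx)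
    · rw [(hdweq x hx).deriv_eq]
      rw [deriv_fun_sub (f := fun y => deriv u y - deriv u₀ y) ((hu x hx).2.1.sub (h0 x hx).2.1) ((h1 x hx).2.1.const_mul s),
        deriv_fun_sub (hu x hx).2.1 (h0 x hx).2.1, deriv_const_mul s (h1 x hx).2.1,
        (h1 x hx).2.2]
      have heq : deriv (deriv u) x = deriv (deriv u₀) x := by
        have e1 := (hu x hx).2.2
        have e2 := (h0 x hx).2.2
        have : β * deriv (deriv u) x = β * deriv (deriv u₀) x := by linarith
        exact mul_left_cancel₀ hβ.ne' this
      rw [heq]; ring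
  obtain ⟨k, c, hk, hc⟩ := affine_on_Ioo hab hd
  exact ⟨k, c, fun x hx => by rw [← hdw x hx]; exact hk x hx, hc⟩

/-- Decomposition (Proposition 2.1): the solution `u` of the interface problem equals the
zero-jump component `u₀` plus `s = u⁺(α) − u⁻(α)` times the unit-jump response `u₁`. -/
theorem stmt_3 (α βm βp : ℝ) (hα : α ∈ Ioo (-1 : ℝ) 1) (hβm : 0 < βm) (hβp : 0 < βp)
    (f : ℝ → ℝ) (ξ η : ℝ)
    (u u₀ u₁ : ℝ → ℝ)
    (um up dum dup u0m u0p d0m d0p u1m u1p d1m d1p : ℝ)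
    -- (a) u solves the interface problem
    (hudiff₁ : ∀ x ∈ Ioo (-1 : ℝ) α, DifferentiableAt ℝ u x ∧ DifferentiableAt ℝ (deriv u) x ∧
        βm * deriv (deriv u) x = -f x)
    (hudiff₂ : ∀ x ∈ Ioo α (1 : ℝ), DifferentiableAt ℝ u x ∧ DifferentiableAt ℝ (deriv u) x ∧
        βp * deriv (deriv u) x = -f x)
    (hucont₁ : ContinuousOn u (Ico (-1 : ℝ) α))
    (hucont₂ : ContinuousOn u (Ioc α (1 : ℝ)))
    (hubc₁ : u (-1) = ξ) (hubc₂ : u 1 = η)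
    (hum : Tendsto u (nhdsWithin α (Ioo (-1 : ℝ) α)) (nhds um))
    (hup : Tendsto u (nhdsWithin α (Ioo α (1 : ℝ))) (nhds up))
    (hdum : Tendsto (deriv u) (nhdsWithin α (Ioo (-1 : ℝ) α)) (nhds dum))
    (hdup : Tendsto (deriv u) (nhdsWithin α (Ioo α (1 : ℝ))) (nhds dup))
    (huflux : βm * dum = βp * dup)
    -- (b) u₀ solves the same problem with zero jump
    (h0diff₁ : ∀ x ∈ Ioo (-1 : ℝ) α, DifferentiableAt ℝ u₀ x ∧ DifferentiableAt ℝ (deriv u₀) x ∧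
        βm * deriv (deriv u₀) x = -f x)
    (h0diff₂ : ∀ x ∈ Ioo α (1 : ℝ), DifferentiableAt ℝ u₀ x ∧ DifferentiableAt ℝ (deriv u₀) x ∧
        βp * deriv (deriv u₀) x = -f x)
    (h0cont₁ : ContinuousOn u₀ (Ico (-1 : ℝ) α))
    (h0cont₂ : ContinuousOn u₀ (Ioc α (1 : ℝ)))
    (h0bc₁ : u₀ (-1) = ξ) (h0bc₂ : u₀ 1 = η)
    (h0m : Tendsto u₀ (nhdsWithin α (Ioo (-1 : ℝ) α)) (nhds u0m))
    (h0p : Tendsto u₀ (nhdsWithin α (Ioo α (1 : ℝ))) (nhds u0p))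
    (hd0m : Tendsto (deriv u₀) (nhdsWithin α (Ioo (-1 : ℝ) α)) (nhds d0m))
    (hd0p : Tendsto (deriv u₀) (nhdsWithin α (Ioo α (1 : ℝ))) (nhds d0p))
    (h0flux : βm * d0m = βp * d0p)
    (h0jump : u0p - u0m = 0)
    -- (c) u₁ is the unit-jump response
    (h1diff₁ : ∀ x ∈ Ioo (-1 : ℝ) α, DifferentiableAt ℝ u₁ x ∧ DifferentiableAt ℝ (deriv u₁) x ∧
        deriv (deriv u₁) x = 0)
    (h1diff₂ : ∀ x ∈ Ioo α (1 : ℝ), DifferentiableAt ℝ u₁ x ∧ DifferentiableAt ℝ (deriv u₁) x ∧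
        deriv (deriv u₁) x = 0)
    (h1cont₁ : ContinuousOn u₁ (Ico (-1 : ℝ) α))
    (h1cont₂ : ContinuousOn u₁ (Ioc α (1 : ℝ)))
    (h1bc₁ : u₁ (-1) = 0) (h1bc₂ : u₁ 1 = 0)
    (h1m : Tendsto u₁ (nhdsWithin α (Ioo (-1 : ℝ) α)) (nhds u1m))
    (h1p : Tendsto u₁ (nhdsWithin α (Ioo α (1 : ℝ))) (nhds u1p))
    (hd1m : Tendsto (deriv u₁) (nhdsWithin α (Ioo (-1 : ℝ) α)) (nhds d1m))
    (hd1p : Tendsto (deriv u₁) (nhdsWithin α (Ioo α (1 : ℝ))) (nhds d1p))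
    (h1flux : βm * d1m = βp * d1p)
    (h1jump : u1p - u1m = 1) :
    ∀ x ∈ Ico (-1 : ℝ) α ∪ Ioc α (1 : ℝ), u x = u₀ x + (up - um) * u₁ x := by
  obtain ⟨hα1, hα2⟩ := hα
  set s : ℝ := up - um with hs
  obtain ⟨k, c, hkL, hcL⟩ := combo_affine hα1 hβm s hudiff₁ h0diff₁ h1diff₁
  obtain ⟨l, e, hkR, hcR⟩ := combo_affine hα2 hβp s hudiff₂ h0diff₂ h1diff₂
  haveI nb1 := right_nhdsWithin_Ioo_neBot hα1
  haveI nb2 := left_nhdsWithin_Ioo_neBot hα2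
  haveI nb3 := left_nhdsWithin_Ioo_neBot hα1
  haveI nb4 := right_nhdsWithin_Ioo_neBot hα2
  -- limits of w at α from the left
  have hwm : Tendsto (fun x => u x - u₀ x - s * u₁ x) (nhdsWithin α (Ioo (-1 : ℝ) α))
      (nhds (um - u0m - s * u1m)) := (hum.sub h0m).sub (h1m.const_mul s)
  have haffL : Tendsto (fun x => u x - u₀ x - s * u₁ x) (nhdsWithin α (Ioo (-1 : ℝ) α))
      (nhds (k * α + c)) := by
    have hb : Tendsto (fun x : ℝ => k * x + c) (nhdsWithin α (Ioo (-1 : ℝ) α))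
        (nhds (k * α + c)) :=
      (((continuous_const.mul continuous_id).add continuous_const).tendsto α).mono_left
        nhdsWithin_le_nhds
    refine hb.congr' ?_
    filter_upwards [self_mem_nhdsWithin] with t ht using (hcL t ht).symm
  have eq1 : um - u0m - s * u1m = k * α + c := tendsto_nhds_unique hwm haffL
  -- value at -1
  have hwcontL : ContinuousOn (fun x => u x - u₀ x - s * u₁ x) (Ico (-1 : ℝ) α) :=
    (hucont₁.sub h0cont₁).sub (continuousOn_const.mul h1cont₁)
  have hminus : (-1 : ℝ) ∈ Ico (-1 : ℝ) α := ⟨le_refl _, hα1⟩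
  have hwm1 : Tendsto (fun x => u x - u₀ x - s * u₁ x) (nhdsWithin (-1 : ℝ) (Ioo (-1 : ℝ) α))
      (nhds 0) := by
    have := (hwcontL (-1) hminus).mono_left
      (nhdsWithin_mono _ Ioo_subset_Ico_self)
    simpa [hubc₁, h0bc₁, h1bc₁] using this
  have haffL1 : Tendsto (fun x => u x - u₀ x - s * u₁ x)
      (nhdsWithin (-1 : ℝ) (Ioo (-1 : ℝ) α)) (nhds (k * (-1) + c)) := by
    have hb : Tendsto (fun x : ℝ => k * x + c) (nhdsWithin (-1 : ℝ) (Ioo (-1 : ℝ) α))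
        (nhds (k * (-1) + c)) :=
      (((continuous_const.mul continuous_id).add continuous_const).tendsto (-1)).mono_left
        nhdsWithin_le_nhds
    refine hb.congr' ?_
    filter_upwards [self_mem_nhdsWithin] with t ht using (hcL t ht).symm
  have eq2 : (0 : ℝ) = k * (-1) + c := tendsto_nhds_unique hwm1 haffL1
  -- derivative limit at α from the left
  have hdwm : Tendsto (fun x => deriv u x - deriv u₀ x - s * deriv u₁ x)
      (nhdsWithin α (Ioo (-1 : ℝ) α)) (nhds (dum - d0m - s * d1m)) :=
    (hdum.sub hd0m).sub (hd1m.const_mul s)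
  have hdwk : Tendsto (fun x => deriv u x - deriv u₀ x - s * deriv u₁ x)
      (nhdsWithin α (Ioo (-1 : ℝ) α)) (nhds k) := by
    refine tendsto_const_nhds.congr' ?_
    filter_upwards [self_mem_nhdsWithin] with t ht using (hkL t ht).symm
  have eq3 : dum - d0m - s * d1m = k := tendsto_nhds_unique hdwm hdwk
  -- right side: limits at α
  have hwp : Tendsto (fun x => u x - u₀ x - s * u₁ x) (nhdsWithin α (Ioo α (1 : ℝ)))
      (nhds (up - u0p - s * u1p)) := (hup.sub h0p).sub (h1p.const_mul s)
  have haffR : Tendsto (fun x => u x - u₀ x - s * u₁ x) (nhdsWithin α (Ioo α (1 : ℝ)))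
      (nhds (l * α + e)) := by
    have hb : Tendsto (fun x : ℝ => l * x + e) (nhdsWithin α (Ioo α (1 : ℝ)))
        (nhds (l * α + e)) :=
      (((continuous_const.mul continuous_id).add continuous_const).tendsto α).mono_left
        nhdsWithin_le_nhds
    refine hb.congr' ?_
    filter_upwards [self_mem_nhdsWithin] with t ht using (hcR t ht).symm
  have eq4 : up - u0p - s * u1p = l * α + e := tendsto_nhds_unique hwp haffR
  -- value at 1
  have hwcontR : ContinuousOn (fun x => u x - u₀ x - s * u₁ x) (Ioc α (1 : ℝ)) :=
    (hucont₂.sub h0cont₂).sub (continuousOn_const.mul h1cont₂)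
  have hone : (1 : ℝ) ∈ Ioc α (1 : ℝ) := ⟨hα2, le_refl _⟩
  have hwp1 : Tendsto (fun x => u x - u₀ x - s * u₁ x) (nhdsWithin (1 : ℝ) (Ioo α (1 : ℝ)))
      (nhds 0) := by
    have := (hwcontR 1 hone).mono_left (nhdsWithin_mono _ Ioo_subset_Ioc_self)
    simpa [hubc₂, h0bc₂, h1bc₂] using this
  have haffR1 : Tendsto (fun x => u x - u₀ x - s * u₁ x)
      (nhdsWithin (1 : ℝ) (Ioo α (1 : ℝ))) (nhds (l * 1 + e)) := by
    have hb : Tendsto (fun x : ℝ => l * x + e) (nhdsWithin (1 : ℝ) (Ioo α (1 : ℝ)))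
        (nhds (l * 1 + e)) :=
      (((continuous_const.mul continuous_id).add continuous_const).tendsto 1).mono_left
        nhdsWithin_le_nhds
    refine hb.congr' ?_
    filter_upwards [self_mem_nhdsWithin] with t ht using (hcR t ht).symm
  have eq5 : (0 : ℝ) = l * 1 + e := tendsto_nhds_unique hwp1 haffR1
  -- derivative limit at α from the right
  have hdwp : Tendsto (fun x => deriv u x - deriv u₀ x - s * deriv u₁ x)
      (nhdsWithin α (Ioo α (1 : ℝ))) (nhds (dup - d0p - s * d1p)) :=
    (hdup.sub hd0p).sub (hd1p.const_mul s)
  have hdwl : Tendsto (fun x => deriv u x - deriv u₀ x - s * deriv u₁ x)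
      (nhdsWithin α (Ioo α (1 : ℝ))) (nhds l) := by
    refine tendsto_const_nhds.congr' ?_
    filter_upwards [self_mem_nhdsWithin] with t ht using (hkR t ht).symm
  have eq6 : dup - d0p - s * d1p = l := tendsto_nhds_unique hdwp hdwl
  -- flux relation for the combination
  have hfl : βm * k = βp * l := by
    rw [← eq3, ← eq6]
    linear_combination huflux - h0flux - s * h1flux
  -- zero jump for the combination
  have hj : l * α + e = k * α + c := by
    rw [← eq1, ← eq4, hs]
    linear_combination (-1 : ℝ) * h0jump - (up - um) * h1jump
  have hck : c = k := by linarith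
  have hel : e = -l := by linarith
  have hjump2 : k * (α + 1) = l * (α - 1) := by
    have := hj
    rw [hck, hel] at this
    linarith
  have key : k * (βp * (α + 1) - βm * (α - 1)) = 0 := by
    linear_combination βp * hjump2 - (α - 1) * hfl
  have hpos : 0 < βp * (α + 1) - βm * (α - 1) := by
    have h1 : 0 < βp * (α + 1) := mul_pos hβp (by linarith)
    have h2 : 0 < βm * (1 - α) := mul_pos hβm (by linarith)
    nlinarith
  have hk0 : k = 0 := by
    rcases mul_eq_zero.mp key with h | h
    · exact h
    · exact absurd h hpos.ne'
  have hl0 : l = 0 := by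
    have : βp * l = 0 := by rw [← hfl, hk0, mul_zero]
    exact (mul_eq_zero.mp this).resolve_left hβp.ne'
  have hc0 : c = 0 := by rw [hck, hk0]
  have he0 : e = 0 := by rw [hel, hl0, neg_zero]
  -- conclude
  intro x hx
  rcases hx with hx | hx
  · rcases eq_or_lt_of_le hx.1 with h | h
    · rw [← h, hubc₁, h0bc₁, h1bc₁]; ring
    · have := hcL x ⟨h, hx.2⟩
      rw [hk0, hc0] at this
      linarith [this]
  · rcases eq_or_lt_of_le hx.2 with h | h
    · rw [h, hubc₂, h0bc₂, h1bc₂]; ring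
    · have := hcR x ⟨hx.1, h⟩
      rw [hl0, he0] at this
      linarith [this]
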